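/- The 3-uniform hypergraph on n vertices whose edges are all 3-sets containing a fixed vertex v is C_3^3-free and has codegree squared sum exactly C(n-1,2)·(2n-3). -/
import Mathlib

open Finset

def pairCodeg {V : Type*} [DecidableEq V] (E : Finset (Finset V)) (p : Finset V) : ℕ :=
  (E.filter (fun e => p ⊆ e)).card

def co2 {V : Type*} [Fintype V] [DecidableEq V] (E : Finset (Finset V)) : ℕ :=
  ∑ p ∈ (Finset.univ : Finset V).powersetCard 2, (pairCodeg E p) ^ 2

/-- `E` contains no loose triangle `C_3^3`. -/
def C33Free {V : Type*} [DecidableEq V] (E : Finset (Finset V)) : Prop :=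
  ¬ ∃ a b c x y z : V, ({a, b, c, x, y, z} : Finset V).card = 6 ∧
    ({x, a, y} : Finset V) ∈ E ∧ ({y, c, z} : Finset V) ∈ E ∧ ({z, b, x} : Finset V) ∈ E

lemma star_codeg_out {V : Type*} [Fintype V] [DecidableEq V] (v : V) (p : Finset V)
    (hp : p.card = 2) (hv : v ∉ p) :
    pairCodeg ((Finset.univ.powersetCard 3).filter (fun e : Finset V => v ∈ e)) p = 1 := by
  unfold pairCodeg
  rw [filter_filter]
  have : filter (fun e => v ∈ e ∧ p ⊆ e) (univ.powersetCard 3) = {insert v p} := by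
    ext e
    simp only [mem_filter, mem_powersetCard, mem_singleton, subset_univ, true_and]
    constructor
    · rintro ⟨hc, hve, hpe⟩
      have hsub : insert v p ⊆ e := insert_subset hve hpe
      have hci : (insert v p).card = 3 := by rw [card_insert_of_notMem hv, hp]
      exact ((eq_of_subset_of_card_le hsub (by omega)).symm)
    · rintro rfl
      exact ⟨by rw [card_insert_of_notMem hv, hp], mem_insert_self _ _, subset_insert _ _⟩
  rw [this, card_singleton]

lemma star_codeg_in {V : Type*} [Fintype V] [DecidableEq V] (v : V) (p : Finset V)
    (hp : p.card = 2) (hv : v ∈ p) :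
    pairCodeg ((Finset.univ.powersetCard 3).filter (fun e : Finset V => v ∈ e)) p
      = Fintype.card V - 2 := by
  unfold pairCodeg
  rw [filter_filter]
  have : filter (fun e => v ∈ e ∧ p ⊆ e) (univ.powersetCard 3)
      = (univ \ p).image (fun w => insert w p) := by
    ext e
    simp only [mem_filter, mem_powersetCard, mem_image, mem_sdiff, mem_univ, true_and,
      subset_univ]
    constructor
    · rintro ⟨hc, -, hpe⟩
      obtain ⟨w, hw⟩ : (e \ p).Nonempty := by
        rw [← card_pos, card_sdiff_of_subset hpe]; omega
      rw [mem_sdiff] at hw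
      refine ⟨w, hw.2, ?_⟩
      have hsub : insert w p ⊆ e := insert_subset hw.1 hpe
      have hci : (insert w p).card = 3 := by rw [card_insert_of_notMem hw.2, hp]
      exact (eq_of_subset_of_card_le hsub (by omega))
    · rintro ⟨w, hw, rfl⟩
      exact ⟨by rw [card_insert_of_notMem hw, hp], mem_insert_of_mem hv,
        subset_insert _ _⟩
  rw [this, card_image_of_injOn, card_sdiff_of_subset (subset_univ p), card_univ, hp]
  intro w hw w' hw' h
  simp only [coe_sdiff, coe_univ, Set.mem_diff, mem_coe] at hw hw'
  have h2 : insert w p = insert w' p := h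
  have : w ∈ insert w' p := h2 ▸ mem_insert_self w p
  rcases mem_insert.1 this with h'|h'
  · exact h'
  · exact absurd h' hw.2

lemma star_arith (k : ℕ) :
    (k + 1) * k ^ 2 + (k + 1).choose 2 = (k + 1).choose 2 * (2 * k + 1) := by
  have hd : 2 ∣ (k + 1) * k := by rw [mul_comm]; exact (Nat.even_mul_succ_self k).two_dvd
  have h2 : 2 * (k + 1).choose 2 = (k + 1) * k := by
    rw [Nat.choose_two_right, Nat.add_sub_cancel]
    exact Nat.mul_div_cancel' hd
  zify at h2 ⊢
  linear_combination (-(k:ℤ)) * h2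

/-- The star: the 3-uniform hypergraph whose edges are all 3-sets containing the
fixed vertex `v` is `C_3^3`-free and has codegree squared sum `C(n-1,2)·(2n-3)`. -/
theorem star_C33Free_co2 {V : Type*} [Fintype V] [DecidableEq V] (v : V) :
    C33Free ((Finset.univ.powersetCard 3).filter (fun e : Finset V => v ∈ e)) ∧
    co2 ((Finset.univ.powersetCard 3).filter (fun e : Finset V => v ∈ e)) =
      (Fintype.card V - 1).choose 2 * (2 * Fintype.card V - 3) := by
  constructor
  · rintro ⟨a, b, c, x, y, z, hcard, h1, h2, h3⟩
    have hnd : ([a,b,c,x,y,z] : List V).Nodup := by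
      have h1' : ([a,b,c,x,y,z] : List V).toFinset = {a,b,c,x,y,z} := by simp
      have h2' : ([a,b,c,x,y,z] : List V).dedup.length = 6 := by
        rw [← List.card_toFinset, h1', hcard]
      rw [← List.dedup_eq_self]
      exact (List.dedup_sublist _).eq_of_length (by simp [h2'])
    have hv1 : v ∈ ({x, a, y} : Finset V) := (mem_filter.1 h1).2
    have hv2 : v ∈ ({y, c, z} : Finset V) := (mem_filter.1 h2).2
    have hv3 : v ∈ ({z, b, x} : Finset V) := (mem_filter.1 h3).2
    simp only [mem_insert, mem_singleton] at hv1 hv2 hv3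
    simp only [List.nodup_cons, List.mem_cons, List.mem_singleton, List.not_mem_nil,
      List.nodup_nil, not_or] at hnd
    rcases hv1 with h|h|h <;> rcases hv2 with h'|h'|h' <;>
      rcases hv3 with h''|h''|h'' <;> simp_all
  · obtain ⟨m, hm⟩ : ∃ m, Fintype.card V = m + 1 :=
      ⟨Fintype.card V - 1, (Nat.succ_pred_eq_of_pos (Fintype.card_pos_iff.2 ⟨v⟩)).symm⟩
    set P := (univ : Finset V).powersetCard 2 with hP
    have hPout : P.filter (fun p => ¬ v ∈ p) = (univ.erase v).powersetCard 2 := by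
      ext p
      simp only [hP, mem_filter, mem_powersetCard, subset_univ, true_and, subset_erase,
        mem_univ, true_and]
      tauto
    have hcout : (P.filter (fun p => ¬ v ∈ p)).card = m.choose 2 := by
      rw [hPout, card_powersetCard, card_erase_of_mem (mem_univ v), card_univ, hm,
        Nat.add_sub_cancel]
    have htot : P.card = (m + 1).choose 2 := by
      rw [hP, card_powersetCard, card_univ, hm]
    have hcin : (P.filter (fun p => v ∈ p)).card = m := by
      have hne := card_filter_add_card_filter_not (s := P) (p := fun p => v ∈ p)
      rw [hcout, htot] at hne
      have hpas : (m + 1).choose 2 = m.choose 1 + m.choose 2 := Nat.choose_succ_succ m 1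
      rw [Nat.choose_one_right] at hpas
      omega
    unfold co2
    rw [← sum_filter_add_sum_filter_not P (fun p => v ∈ p)]
    have hsum1 : ∑ p ∈ P.filter (fun p => v ∈ p),
        pairCodeg ((Finset.univ.powersetCard 3).filter (fun e : Finset V => v ∈ e)) p ^ 2
        = m * (m - 1) ^ 2 := by
      rw [sum_congr rfl (fun p hp => ?_), sum_const, hcin, smul_eq_mul]
      rw [mem_filter, hP, mem_powersetCard] at hp
      rw [star_codeg_in v p hp.1.2 hp.2, hm]
      congr 1
    have hsum2 : ∑ p ∈ P.filter (fun p => ¬ v ∈ p),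
        pairCodeg ((Finset.univ.powersetCard 3).filter (fun e : Finset V => v ∈ e)) p ^ 2
        = m.choose 2 := by
      rw [sum_congr rfl (fun p hp => ?_), sum_const, hcout, smul_eq_mul, mul_one]
      rw [mem_filter, hP, mem_powersetCard] at hp
      rw [star_codeg_out v p hp.1.2 hp.2, one_pow]
    rw [hsum1, hsum2, hm]
    rcases m with _ | k
    · simp
    · have h23 : 2 * (k + 1 + 1) - 3 = 2 * k + 1 := by omega
      have h12 : k + 1 - 1 = k := by omega
      rw [h23, h12]
      exact star_arith k
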